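/- Let 0<s<1 and 0<r<1+2s. Define G:[0,1/2]→ℝ by G(0) := 0 and G(x) := x^{r-2s} ∫_{1/(2x)}^{+∞} ((t+1)^r - (t-1)^r) t^{-1-2s} dt for 0 < x ≤ 1/2. Then G is continuously differentiable on [0,1/2] (with one-sided derivatives at the endpoints); in particular, the one-sided derivative G'(0⁺) := lim_{x→0⁺} G'(x) exists and is finite. -/

import Mathlib

open MeasureTheory Filter Set

namespace Stmt6Aux

/-- helper: bound `x ^ e` by sum of endpoint powers, valid for any sign of `e`. -/
lemma rpow_le_add {low x high e : ℝ} (h0 : 0 < low) (h1 : low ≤ x) (h2 : x ≤ high) :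
    x ^ e ≤ low ^ e + high ^ e := by
  rcases le_or_gt 0 e with he | he
  · have h := Real.rpow_le_rpow (le_trans h0.le h1) h2 he
    have h' : (0:ℝ) ≤ low ^ e := Real.rpow_nonneg h0.le e
    linarith
  · have h := Real.rpow_le_rpow_of_nonpos h0 h1 he.le
    have h' : (0:ℝ) ≤ high ^ e := Real.rpow_nonneg (by linarith : (0:ℝ) ≤ high) e
    linarith

/-- the integrand of the derivative -/
noncomputable def D (s r v u : ℝ) : ℝ :=
  (r * (v + u) ^ (r - 1) + r * (v - u) ^ (r - 1)) / v ^ (1 + 2 * s)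

/-- a dominating bound for `D` -/
noncomputable def Bnd (s r v : ℝ) : ℝ :=
  r * ((v + 1) ^ (r - 1) + 2 * v ^ (r - 1) + (v - 1/2) ^ (r - 1)) / v ^ (1 + 2 * s)

noncomputable def H (s r u : ℝ) : ℝ := ∫ v in Ioi (1/2 : ℝ), D s r v u

noncomputable def Hc (s r u : ℝ) : ℝ := H s r (max 0 (min u (1/2)))

lemma D_nonneg {s r : ℝ} (hr0 : 0 < r) {v u : ℝ} (hv : (1:ℝ)/2 < v)
    (hu0 : 0 ≤ u) (hu1 : u ≤ 1/2) : 0 ≤ D s r v u := by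
  have h1 : (0:ℝ) ≤ (v + u) ^ (r - 1) := Real.rpow_nonneg (by linarith) _
  have h2 : (0:ℝ) ≤ (v - u) ^ (r - 1) := Real.rpow_nonneg (by linarith) _
  have h3 : (0:ℝ) ≤ v ^ (1 + 2 * s) := Real.rpow_nonneg (by linarith) _
  exact div_nonneg (by nlinarith [hr0.le]) h3

lemma D_le_Bnd {s r : ℝ} (hr0 : 0 < r) {v u : ℝ} (hv : (1:ℝ)/2 < v)
    (hu0 : 0 ≤ u) (hu1 : u ≤ 1/2) : ‖D s r v u‖ ≤ Bnd s r v := by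
  rw [Real.norm_eq_abs, abs_of_nonneg (D_nonneg hr0 hv hu0 hu1)]
  have hvpos : (0:ℝ) < v := by linarith
  have h1 : (v + u) ^ (r - 1) ≤ v ^ (r - 1) + (v + 1) ^ (r - 1) :=
    rpow_le_add hvpos (by linarith) (by linarith)
  have h2 : (v - u) ^ (r - 1) ≤ (v - 1/2) ^ (r - 1) + v ^ (r - 1) :=
    rpow_le_add (by linarith) (by linarith) (by linarith)
  have h3 : (0:ℝ) < v ^ (1 + 2 * s) := Real.rpow_pos_of_pos hvpos _
  unfold D Bnd
  rw [div_le_div_iff_of_pos_right h3]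
  nlinarith [hr0.le]

lemma Bnd_nonneg {s r : ℝ} (hr0 : 0 < r) {v : ℝ} (hv : (1:ℝ)/2 < v) :
    0 ≤ Bnd s r v := by
  have h1 : (0:ℝ) ≤ (v + 1) ^ (r - 1) := Real.rpow_nonneg (by linarith) _
  have h2 : (0:ℝ) ≤ v ^ (r - 1) := Real.rpow_nonneg (by linarith) _
  have h2' : (0:ℝ) ≤ (v - 1/2) ^ (r - 1) := Real.rpow_nonneg (by linarith) _
  have h3 : (0:ℝ) ≤ v ^ (1 + 2 * s) := Real.rpow_nonneg (by linarith) _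
  exact div_nonneg (by nlinarith [hr0.le]) h3

lemma Bnd_contOn {s r : ℝ} : ContinuousOn (Bnd s r) (Ioi (1/2 : ℝ)) := by
  intro v hv
  have hv' : (1:ℝ)/2 < v := hv.out
  apply ContinuousAt.continuousWithinAt
  have c1 : ContinuousAt (fun v : ℝ => (v + 1) ^ (r - 1)) v :=
    ContinuousAt.rpow_const (by fun_prop) (Or.inl (by show v + 1 ≠ 0; intro h; linarith))
  have c2 : ContinuousAt (fun v : ℝ => v ^ (r - 1)) v :=
    ContinuousAt.rpow_const (by fun_prop) (Or.inl (by show v ≠ 0; intro h; linarith))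
  have c3 : ContinuousAt (fun v : ℝ => (v - 1/2) ^ (r - 1)) v :=
    ContinuousAt.rpow_const (by fun_prop) (Or.inl (by show v - 1/2 ≠ 0; intro h; linarith))
  have c4 : ContinuousAt (fun v : ℝ => v ^ (1 + 2*s)) v :=
    ContinuousAt.rpow_const (by fun_prop) (Or.inl (by show v ≠ 0; intro h; linarith))
  have c5 : v ^ (1 + 2*s) ≠ 0 := ne_of_gt (Real.rpow_pos_of_pos (by linarith) _)
  exact ((continuousAt_const.mul ((c1.add (continuousAt_const.mul c2)).add c3)).div c4 c5)

lemma two_rpow_le {e : ℝ} (he : e ≤ 2) : (2:ℝ) ^ e ≤ 4 := by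
  calc (2:ℝ) ^ e ≤ (2:ℝ) ^ (2:ℝ) := Real.rpow_le_rpow_of_exponent_le one_le_two he
  _ = 4 := by
    rw [show (2:ℝ) = ((2:ℕ):ℝ) from by norm_num]
    rw [Real.rpow_natCast]; norm_num

lemma half_rpow_le {e : ℝ} (he : -1 ≤ e) : (1/2:ℝ) ^ e ≤ 2 := by
  have h1 : (1/2:ℝ) ^ e = ((2:ℝ) ^ e)⁻¹ := by
    rw [show (1/2:ℝ) = (2:ℝ)⁻¹ from by norm_num, Real.inv_rpow (by norm_num)]
  have h2 : (1/2:ℝ) ≤ (2:ℝ) ^ e := by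
    calc (1/2:ℝ) = (2:ℝ) ^ (-1:ℝ) := by rw [Real.rpow_neg_one]; norm_num
    _ ≤ (2:ℝ) ^ e := Real.rpow_le_rpow_of_exponent_le one_le_two he
  rw [h1]
  calc ((2:ℝ) ^ e)⁻¹ ≤ ((1:ℝ)/2)⁻¹ := by
        apply inv_anti₀ (by norm_num) h2
  _ = 2 := by norm_num

lemma Bnd_integrable {s r : ℝ} (hs0 : 0 < s) (hs1 : s < 1) (hr0 : 0 < r)
    (hr1 : r < 1 + 2 * s) : IntegrableOn (Bnd s r) (Ioi (1/2 : ℝ)) := by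
  have key2 : IntegrableOn (Bnd s r) (Ioi (1:ℝ)) := by
    have hint : IntegrableOn (fun v : ℝ => 10 * r * v ^ ((r-1) - (1+2*s))) (Ioi (1:ℝ)) :=
      (integrableOn_Ioi_rpow_of_lt (by linarith) one_pos).const_mul _
    apply Integrable.mono hint
    · exact (Bnd_contOn.mono (fun v hv => by simp at hv ⊢; linarith)).aestronglyMeasurable
        measurableSet_Ioi
    · rw [ae_restrict_iff' measurableSet_Ioi]
      filter_upwards with v hv
      have hv1 : (1:ℝ) ≤ v := le_of_lt hv.out
      have hv2 : (1:ℝ)/2 < v := by linarith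
      have hvpos : (0:ℝ) < v := by linarith
      rw [Real.norm_eq_abs, abs_of_nonneg (Bnd_nonneg hr0 hv2)]
      -- bound each numerator term by a multiple of v ^ (r-1)
      have w0 : (0:ℝ) ≤ v ^ (r-1) := Real.rpow_nonneg hvpos.le _
      have e1 : (v + 1) ^ (r-1) ≤ 5 * v ^ (r-1) := by
        have := rpow_le_add (e := r - 1) hvpos (by linarith : v ≤ v + 1) (by linarith : v + 1 ≤ 2*v)
        have h2v : (2*v) ^ (r-1) = 2 ^ (r-1) * v ^ (r-1) :=
          Real.mul_rpow (by norm_num) hvpos.le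
        have h4 : (2:ℝ) ^ (r-1) ≤ 4 := two_rpow_le (by linarith)
        nlinarith
      have e2 : (v - 1/2) ^ (r-1) ≤ 3 * v ^ (r-1) := by
        have := rpow_le_add (e := r - 1) (by linarith : (0:ℝ) < v/2)
          (by linarith : v/2 ≤ v - 1/2) (by linarith : v - 1/2 ≤ v)
        have h2v : (v/2) ^ (r-1) = v ^ (r-1) * (1/2) ^ (r-1) := by
          rw [show v/2 = v * (1/2) from by ring, Real.mul_rpow hvpos.le (by norm_num)]
        have h4 : (1/2:ℝ) ^ (r-1) ≤ 2 := half_rpow_le (by linarith)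
        nlinarith
      have hvp : (0:ℝ) < v ^ (1 + 2*s) := Real.rpow_pos_of_pos hvpos _
      have hsub : v ^ ((r-1) - (1+2*s)) = v ^ (r-1) / v ^ (1+2*s) := Real.rpow_sub hvpos _ _
      have habs : |10 * r * v ^ ((r-1) - (1+2*s))| = 10 * r * v ^ ((r-1)-(1+2*s)) := by
        apply abs_of_nonneg
        positivity
      rw [Real.norm_eq_abs, habs, hsub]
      unfold Bnd
      rw [← mul_div_assoc, div_le_div_iff_of_pos_right hvp]
      nlinarith [hr0.le]
  have key1 : IntegrableOn (Bnd s r) (Ioc (1/2:ℝ) 1) := by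
    set C : ℝ := (3/2:ℝ) ^ (r-1) + 2 ^ (r-1) + 2 * ((1/2:ℝ) ^ (r-1) + 1) with hC
    have hCnn : 0 ≤ C := by
      have := Real.rpow_nonneg (by norm_num : (0:ℝ) ≤ 3/2) (r-1)
      have := Real.rpow_nonneg (by norm_num : (0:ℝ) ≤ 2) (r-1)
      have := Real.rpow_nonneg (by norm_num : (0:ℝ) ≤ 1/2) (r-1)
      positivity
    have hw : IntegrableOn (fun v : ℝ => (v - 1/2) ^ (r-1)) (Ioc (1/2:ℝ) 1) := by
      have h0 : IntervalIntegrable (fun x : ℝ => x ^ (r-1)) volume 0 (1/2) :=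
        intervalIntegral.intervalIntegrable_rpow' (by linarith)
      have h1 := h0.comp_sub_right (1/2)
      norm_num at h1
      rw [intervalIntegrable_iff_integrableOn_Ioc_of_le (by norm_num)] at h1
      convert h1 using 2 <;> norm_num
    have hint : IntegrableOn (fun v : ℝ => 8*r*C + 8*r*(v - 1/2) ^ (r-1)) (Ioc (1/2:ℝ) 1) := by
      apply Integrable.add
      · exact integrableOn_const measure_Ioc_lt_top.ne
      · exact hw.const_mul _
    apply Integrable.mono hint
    · exact (Bnd_contOn.mono (fun v hv => hv.1)).aestronglyMeasurable measurableSet_Ioc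
    · rw [ae_restrict_iff' measurableSet_Ioc]
      filter_upwards with v hv
      obtain ⟨hv1, hv2⟩ := hv
      have hvpos : (0:ℝ) < v := by linarith
      rw [Real.norm_eq_abs, abs_of_nonneg (Bnd_nonneg hr0 hv1)]
      have w0 : (0:ℝ) ≤ (v - 1/2) ^ (r-1) := Real.rpow_nonneg (by linarith) _
      have e1 : (v + 1) ^ (r-1) ≤ (3/2:ℝ) ^ (r-1) + 2 ^ (r-1) :=
        rpow_le_add (by norm_num) (by linarith) (by linarith)
      have e2 : v ^ (r-1) ≤ (1/2:ℝ) ^ (r-1) + 1 := by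
        have := rpow_le_add (e := r-1) (by norm_num : (0:ℝ) < 1/2) hv1.le hv2
        rwa [Real.one_rpow] at this
      have e3 : (1/8:ℝ) ≤ v ^ (1+2*s) := by
        calc (1/8:ℝ) = (1/2:ℝ) ^ ((3:ℕ):ℝ) := by rw [Real.rpow_natCast]; norm_num
        _ ≤ (1/2:ℝ) ^ (1+2*s) := by
            apply Real.rpow_le_rpow_of_exponent_ge (by norm_num) (by norm_num)
            push_cast; linarith
        _ ≤ v ^ (1+2*s) := Real.rpow_le_rpow (by norm_num) hv1.le (by linarith)
      have hvp : (0:ℝ) < v ^ (1 + 2*s) := by linarith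
      have habs : ‖8*r*C + 8*r*(v - 1/2) ^ (r-1)‖ = 8*r*C + 8*r*(v - 1/2) ^ (r-1) := by
        rw [Real.norm_eq_abs]; apply abs_of_nonneg; positivity
      rw [habs]
      unfold Bnd
      rw [div_le_iff₀ hvp]
      have key : r * ((v+1)^(r-1) + 2*v^(r-1) + (v-1/2)^(r-1)) ≤ r * (C + (v-1/2)^(r-1)) := by
        have : (v+1)^(r-1) + 2*v^(r-1) + (v-1/2)^(r-1) ≤ C + (v-1/2)^(r-1) := by
          rw [hC]; nlinarith
        nlinarith
      calc r * ((v+1)^(r-1) + 2*v^(r-1) + (v-1/2)^(r-1)) ≤ r * (C + (v-1/2)^(r-1)) := key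
      _ = (8*r*C + 8*r*(v-1/2)^(r-1)) * (1/8) := by ring
      _ ≤ (8*r*C + 8*r*(v-1/2)^(r-1)) * v^(1+2*s) := by
          apply mul_le_mul_of_nonneg_left e3
          positivity
  have hunion : Ioi (1/2:ℝ) = Ioc (1/2:ℝ) 1 ∪ Ioi 1 := (Ioc_union_Ioi_eq_Ioi (by norm_num)).symm
  rw [hunion]
  exact key1.union key2

lemma D_contOn_v {s r u : ℝ} (hu0 : 0 ≤ u) (hu1 : u ≤ 1/2) :
    ContinuousOn (fun v => D s r v u) (Ioi (1/2 : ℝ)) := by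
  intro v hv
  have hv' : (1:ℝ)/2 < v := hv.out
  apply ContinuousAt.continuousWithinAt
  have c1 : ContinuousAt (fun v : ℝ => (v + u) ^ (r - 1)) v :=
    ContinuousAt.rpow_const (by fun_prop) (Or.inl (by show v + u ≠ 0; intro h; linarith))
  have c2 : ContinuousAt (fun v : ℝ => (v - u) ^ (r - 1)) v :=
    ContinuousAt.rpow_const (by fun_prop) (Or.inl (by show v - u ≠ 0; intro h; linarith))
  have c4 : ContinuousAt (fun v : ℝ => v ^ (1 + 2*s)) v :=
    ContinuousAt.rpow_const (by fun_prop) (Or.inl (by show v ≠ 0; intro h; linarith))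
  have c5 : v ^ (1 + 2*s) ≠ 0 := ne_of_gt (Real.rpow_pos_of_pos (by linarith) _)
  exact ((continuousAt_const.mul c1).add (continuousAt_const.mul c2)).div c4 c5

lemma D_contOn_u {s r v : ℝ} (hv : (1:ℝ)/2 < v) :
    ContinuousOn (fun u => D s r v u) (Icc (0:ℝ) (1/2)) := by
  intro u hu
  obtain ⟨hu0, hu1⟩ := hu
  apply ContinuousAt.continuousWithinAt
  have c1 : ContinuousAt (fun u : ℝ => (v + u) ^ (r - 1)) u :=
    ContinuousAt.rpow_const (by fun_prop) (Or.inl (by show v + u ≠ 0; intro h; linarith))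
  have c2 : ContinuousAt (fun u : ℝ => (v - u) ^ (r - 1)) u :=
    ContinuousAt.rpow_const (by fun_prop) (Or.inl (by show v - u ≠ 0; intro h; linarith))
  have c5 : v ^ (1 + 2*s) ≠ 0 := ne_of_gt (Real.rpow_pos_of_pos (by linarith) _)
  exact ((continuousAt_const.mul c1).add (continuousAt_const.mul c2)).div continuousAt_const c5

lemma H_contOn {s r : ℝ} (hs0 : 0 < s) (hs1 : s < 1) (hr0 : 0 < r)
    (hr1 : r < 1 + 2 * s) : ContinuousOn (H s r) (Icc 0 (1/2 : ℝ)) := by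
  unfold H
  apply MeasureTheory.continuousOn_of_dominated (bound := Bnd s r)
  · intro u hu
    exact (D_contOn_v hu.1 hu.2).aestronglyMeasurable measurableSet_Ioi
  · intro u hu
    rw [ae_restrict_iff' measurableSet_Ioi]
    filter_upwards with v hv
    exact D_le_Bnd hr0 hv.out hu.1 hu.2
  · exact Bnd_integrable hs0 hs1 hr0 hr1
  · rw [ae_restrict_iff' measurableSet_Ioi]
    filter_upwards with v hv
    exact D_contOn_u hv.out

lemma Hc_cont {s r : ℝ} (hs0 : 0 < s) (hs1 : s < 1) (hr0 : 0 < r)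
    (hr1 : r < 1 + 2 * s) : Continuous (Hc s r) := by
  have hmap : ∀ u : ℝ, max 0 (min u (1/2)) ∈ Icc (0:ℝ) (1/2) :=
    fun u => ⟨le_max_left _ _, max_le (by norm_num) (min_le_right _ _)⟩
  exact (H_contOn hs0 hs1 hr0 hr1).comp_continuous
    (continuous_const.max (continuous_id.min continuous_const)) hmap

lemma ftc_pt {s r : ℝ} (hr0 : 0 < r) {x v : ℝ} (hx0 : 0 < x) (hx1 : x ≤ 1/2)
    (hv : (1:ℝ)/2 < v) :
    ((v + x) ^ r - (v - x) ^ r) / v ^ (1 + 2 * s) = ∫ u in (0:ℝ)..x, D s r v u := by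
  have hderiv : ∀ u ∈ uIcc (0:ℝ) x,
      HasDerivAt (fun u => ((v + u) ^ r - (v - u) ^ r) / v ^ (1 + 2 * s)) (D s r v u) u := by
    intro u hu
    rw [uIcc_of_le hx0.le] at hu
    obtain ⟨hu0, hu1⟩ := hu
    have hvu1 : 0 < v + u := by linarith
    have hvu2 : 0 < v - u := by linarith
    have h1 : HasDerivAt (fun u : ℝ => (v + u) ^ r) (r * (v + u) ^ (r - 1) * 1) u := by
      have inner : HasDerivAt (fun u : ℝ => v + u) 1 u := (hasDerivAt_id u).const_add v
      exact (Real.hasDerivAt_rpow_const (Or.inl (ne_of_gt hvu1))).comp u inner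
    have h2 : HasDerivAt (fun u : ℝ => (v - u) ^ r) (r * (v - u) ^ (r - 1) * (-1)) u := by
      have inner : HasDerivAt (fun u : ℝ => v - u) (-1) u := by
        simpa using (hasDerivAt_id u).const_sub v
      exact (Real.hasDerivAt_rpow_const (Or.inl (ne_of_gt hvu2))).comp u inner
    have h3 := (h1.sub h2).div_const (v ^ (1 + 2 * s))
    rw [show D s r v u = (r * (v + u) ^ (r - 1) * 1 - r * (v - u) ^ (r - 1) * (-1)) / v ^ (1 + 2 * s) by unfold D; ring]
    exact h3
  have hint : IntervalIntegrable (D s r v) volume 0 x := by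
    apply ContinuousOn.intervalIntegrable
    rw [uIcc_of_le hx0.le]
    exact (D_contOn_u hv).mono (Icc_subset_Icc le_rfl hx1)
  rw [intervalIntegral.integral_eq_sub_of_hasDerivAt hderiv hint]
  simp

lemma uncurry_meas {s r : ℝ} {x : ℝ} (hx0 : 0 < x) (hx1 : x ≤ 1/2) :
    AEStronglyMeasurable (Function.uncurry fun v u => D s r v u)
      ((volume.restrict (Ioi (1/2:ℝ))).prod (volume.restrict (Ioc (0:ℝ) x))) := by
  rw [Measure.prod_restrict]
  apply ContinuousOn.aestronglyMeasurable ?_ (measurableSet_Ioi.prod measurableSet_Ioc)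
  intro p hp
  obtain ⟨hp1, hp2⟩ := hp
  have hv : (1:ℝ)/2 < p.1 := hp1
  have hu0 : 0 < p.2 := hp2.1
  have hu1 : p.2 ≤ x := hp2.2
  apply ContinuousAt.continuousWithinAt
  have c1 : ContinuousAt (fun p : ℝ × ℝ => (p.1 + p.2) ^ (r - 1)) p :=
    ContinuousAt.rpow_const (by fun_prop)
      (Or.inl (by show p.1 + p.2 ≠ 0; intro h; linarith))
  have c2 : ContinuousAt (fun p : ℝ × ℝ => (p.1 - p.2) ^ (r - 1)) p :=
    ContinuousAt.rpow_const (by fun_prop)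
      (Or.inl (by show p.1 - p.2 ≠ 0; intro h; linarith))
  have c4 : ContinuousAt (fun p : ℝ × ℝ => p.1 ^ (1 + 2 * s)) p :=
    ContinuousAt.rpow_const (by fun_prop) (Or.inl (by show p.1 ≠ 0; intro h; linarith))
  have c5 : p.1 ^ (1 + 2 * s) ≠ 0 := ne_of_gt (Real.rpow_pos_of_pos (by linarith) _)
  exact ((continuousAt_const.mul c1).add (continuousAt_const.mul c2)).div c4 c5

lemma fubini_step {s r : ℝ} (hs0 : 0 < s) (hs1 : s < 1) (hr0 : 0 < r)
    (hr1 : r < 1 + 2 * s) {x : ℝ} (hx0 : 0 < x) (hx1 : x ≤ 1/2) :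
    ∫ v in Ioi (1/2:ℝ), ∫ u in Ioc (0:ℝ) x, D s r v u
      = ∫ u in Ioc (0:ℝ) x, H s r u := by
  have hmeas := uncurry_meas (s := s) (r := r) hx0 hx1
  have hprod : Integrable (Function.uncurry fun v u => D s r v u)
      ((volume.restrict (Ioi (1/2:ℝ))).prod (volume.restrict (Ioc (0:ℝ) x))) := by
    rw [integrable_prod_iff hmeas]
    constructor
    · rw [ae_restrict_iff' measurableSet_Ioi]
      filter_upwards with v hv
      exact (((D_contOn_u hv.out).mono
        (Icc_subset_Icc le_rfl hx1)).integrableOn_compact isCompact_Icc).mono_set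
        Ioc_subset_Icc_self
    · apply Integrable.mono ((Bnd_integrable hs0 hs1 hr0 hr1).const_mul x)
      · exact hmeas.norm.integral_prod_right'
      · rw [ae_restrict_iff' measurableSet_Ioi]
        filter_upwards with v hv
        have hv' : (1:ℝ)/2 < v := hv.out
        have hb : ∀ u ∈ Ioc (0:ℝ) x, ‖D s r v u‖ ≤ Bnd s r v :=
          fun u hu => D_le_Bnd hr0 hv' hu.1.le (le_trans hu.2 hx1)
        have hintD : IntegrableOn (fun u => ‖D s r v u‖) (Ioc (0:ℝ) x) :=
          ((((D_contOn_u hv').mono (Icc_subset_Icc le_rfl hx1)).integrableOn_compact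
            isCompact_Icc).mono_set Ioc_subset_Icc_self).norm
        have h1 : ∫ u in Ioc (0:ℝ) x, ‖D s r v u‖ ≤ ∫ _ in Ioc (0:ℝ) x, Bnd s r v :=
          setIntegral_mono_on hintD (integrableOn_const measure_Ioc_lt_top.ne)
            measurableSet_Ioc hb
        have h2 : ∫ _ in Ioc (0:ℝ) x, Bnd s r v = x * Bnd s r v := by
          rw [setIntegral_const, Real.volume_real_Ioc_of_le hx0.le, smul_eq_mul]
          ring_nf
        have h3 : (0:ℝ) ≤ ∫ u in Ioc (0:ℝ) x, ‖D s r v u‖ :=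
          setIntegral_nonneg measurableSet_Ioc (fun u _ => norm_nonneg _)
        have h4 : (0:ℝ) ≤ x * Bnd s r v := mul_nonneg hx0.le (Bnd_nonneg hr0 hv')
        simp only [Function.uncurry_apply_pair]
        rw [Real.norm_eq_abs, Real.norm_eq_abs, abs_of_nonneg h3, abs_of_nonneg h4]
        exact h1.trans_eq h2
  exact MeasureTheory.integral_integral_swap hprod


lemma G_rep {s r : ℝ} (hs0 : 0 < s) (hs1 : s < 1) (hr0 : 0 < r)
    (hr1 : r < 1 + 2 * s) {x : ℝ} (hx0 : 0 < x) (hx1 : x ≤ 1/2) :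
    x ^ (r - 2 * s) *
        (∫ t in Ioi (1 / (2 * x)), ((t + 1) ^ r - (t - 1) ^ r) / t ^ (1 + 2 * s))
      = ∫ u in (0:ℝ)..x, Hc s r u := by
  set g : ℝ → ℝ := fun t => ((t + 1) ^ r - (t - 1) ^ r) / t ^ (1 + 2 * s) with hg
  have hxne : x ≠ 0 := hx0.ne'
  -- change of variables
  have h1 : ∫ v in Ioi (1/2:ℝ), g (x⁻¹ * v) = x * ∫ t in Ioi (1 / (2 * x)), g t := by
    rw [MeasureTheory.integral_comp_mul_left_Ioi g (1/2) (inv_pos.2 hx0), inv_inv,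
      smul_eq_mul, show x⁻¹ * (1/2:ℝ) = 1 / (2 * x) from by field_simp]
  -- pointwise identity on Ioi (1/2)
  have h2 : ∀ v ∈ Ioi (1/2:ℝ),
      g (x⁻¹ * v) = x ^ (1 + 2 * s - r) * (((v + x) ^ r - (v - x) ^ r) / v ^ (1 + 2 * s)) := by
    intro v hv
    have hv' : (1:ℝ)/2 < v := hv.out
    have hvx1 : (0:ℝ) < v + x := by linarith
    have hvx2 : (0:ℝ) < v - x := by linarith
    have ht1 : x⁻¹ * v + 1 = (v + x) / x := by field_simp
    have ht2 : x⁻¹ * v - 1 = (v - x) / x := by field_simp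
    have ht3 : x⁻¹ * v = v / x := by field_simp
    rw [hg]
    simp only []
    rw [ht1, ht2, ht3, Real.div_rpow hvx1.le hx0.le, Real.div_rpow hvx2.le hx0.le,
      Real.div_rpow (by linarith : (0:ℝ) ≤ v) hx0.le, Real.rpow_sub hx0]
    have hxr : (0:ℝ) < x ^ r := Real.rpow_pos_of_pos hx0 _
    have hxp : (0:ℝ) < x ^ (1 + 2 * s) := Real.rpow_pos_of_pos hx0 _
    have hvp : (0:ℝ) < v ^ (1 + 2 * s) := Real.rpow_pos_of_pos (by linarith) _
    field_simp
  have h3 : ∫ v in Ioi (1/2:ℝ), g (x⁻¹ * v)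
      = x ^ (1 + 2 * s - r) *
        ∫ v in Ioi (1/2:ℝ), ((v + x) ^ r - (v - x) ^ r) / v ^ (1 + 2 * s) := by
    rw [setIntegral_congr_fun measurableSet_Ioi h2, integral_const_mul]
  -- the v-integral equals the double integral
  have h4 : ∫ v in Ioi (1/2:ℝ), ((v + x) ^ r - (v - x) ^ r) / v ^ (1 + 2 * s)
      = ∫ u in (0:ℝ)..x, H s r u := by
    have e1 : ∀ v ∈ Ioi (1/2:ℝ),
        ((v + x) ^ r - (v - x) ^ r) / v ^ (1 + 2 * s) = ∫ u in Ioc (0:ℝ) x, D s r v u := by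
      intro v hv
      rw [ftc_pt hr0 hx0 hx1 hv.out, intervalIntegral.integral_of_le hx0.le]
    rw [setIntegral_congr_fun measurableSet_Ioi e1, fubini_step hs0 hs1 hr0 hr1 hx0 hx1,
      intervalIntegral.integral_of_le hx0.le]
  -- replace H by Hc on [0, x]
  have h5 : ∫ u in (0:ℝ)..x, H s r u = ∫ u in (0:ℝ)..x, Hc s r u := by
    apply intervalIntegral.integral_congr
    intro u hu
    rw [uIcc_of_le hx0.le] at hu
    unfold Hc
    rw [min_eq_left (by linarith [hu.2] : u ≤ 1/2), max_eq_right hu.1]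
  -- put everything together
  have hfact : x ^ (r - 2 * s) * x⁻¹ * x ^ (1 + 2 * s - r) = 1 := by
    rw [← Real.rpow_neg_one x, ← Real.rpow_add hx0, ← Real.rpow_add hx0,
      show r - 2 * s + -1 + (1 + 2 * s - r) = 0 from by ring, Real.rpow_zero]
  have hmain : x ^ (r - 2 * s) * ∫ t in Ioi (1 / (2 * x)), g t
      = (x ^ (r - 2 * s) * x⁻¹ * x ^ (1 + 2 * s - r)) *
        ∫ v in Ioi (1/2:ℝ), ((v + x) ^ r - (v - x) ^ r) / v ^ (1 + 2 * s) := by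
    have : ∫ t in Ioi (1 / (2 * x)), g t = x⁻¹ * ∫ v in Ioi (1/2:ℝ), g (x⁻¹ * v) := by
      rw [h1]; field_simp
    rw [this, h3]; ring
  rw [hmain, hfact, one_mul, h4, h5]


end Stmt6Aux

theorem stmt6 (s r : ℝ) (hs0 : 0 < s) (hs1 : s < 1) (hr0 : 0 < r) (hr1 : r < 1 + 2 * s)
    (G : ℝ → ℝ) (hG0 : G 0 = 0)
    (hG : ∀ x : ℝ, 0 < x → x ≤ 1 / 2 →
      G x = x ^ (r - 2 * s) *
        ∫ t in Set.Ioi (1 / (2 * x)), ((t + 1) ^ r - (t - 1) ^ r) / t ^ (1 + 2 * s)) :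
    ContDiffOn ℝ 1 G (Set.Icc 0 (1 / 2)) ∧
    ∃ l : ℝ, Filter.Tendsto (deriv G) (nhdsWithin 0 (Set.Ioi 0)) (nhds l) := by
  open Stmt6Aux in
  have hHc : Continuous (Stmt6Aux.Hc s r) := Stmt6Aux.Hc_cont hs0 hs1 hr0 hr1
  set K : ℝ → ℝ := fun x => ∫ u in (0:ℝ)..x, Stmt6Aux.Hc s r u with hK
  have hKderiv : ∀ y : ℝ, HasDerivAt K (Stmt6Aux.Hc s r y) y := fun y =>
    intervalIntegral.integral_hasDerivAt_right (hHc.intervalIntegrable _ _)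
      (hHc.stronglyMeasurableAtFilter _ _) hHc.continuousAt
  have hKcd : ContDiff ℝ 1 K := by
    rw [contDiff_one_iff_deriv]
    refine ⟨fun y => (hKderiv y).differentiableAt, ?_⟩
    have hdK : deriv K = Stmt6Aux.Hc s r := funext fun y => (hKderiv y).deriv
    rw [hdK]; exact hHc
  have hGK : ∀ y ∈ Set.Icc (0:ℝ) (1/2), G y = K y := by
    intro y hy
    rcases eq_or_lt_of_le hy.1 with h | h
    · rw [← h, hG0, hK]
      simp
    · rw [hG y h hy.2, Stmt6Aux.G_rep hs0 hs1 hr0 hr1 h hy.2]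
  constructor
  · exact hKcd.contDiffOn.congr hGK
  · refine ⟨Stmt6Aux.Hc s r 0, ?_⟩
    have hev : deriv G =ᶠ[nhdsWithin 0 (Set.Ioi 0)] Stmt6Aux.Hc s r := by
      filter_upwards [Ioo_mem_nhdsGT
        (by norm_num : (0:ℝ) < 1/2)] with y hy
      have hGeqK : G =ᶠ[nhds y] K :=
        Filter.eventuallyEq_of_mem (isOpen_Ioo.mem_nhds hy)
          (fun z hz => hGK z ⟨hz.1.le, hz.2.le⟩)
      rw [hGeqK.deriv_eq, (hKderiv y).deriv]
    exact Filter.Tendsto.congr' hev.symm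
      ((hHc.tendsto 0).mono_left nhdsWithin_le_nhds)
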